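/- Let m be a positive integer and let D be the m×m cyclic-shift permutation matrix (with D[i][i+1 mod m] = 1 and zeros elsewhere), B = Dᵗ = D⁻¹, and U(r) the m×m matrix with all entries 1 in the r-th row and 0 elsewhere. Then det(B − I + U(r)) = (−1)^{m−1} m for every r with 1 ≤ r ≤ m. -/

import Mathlib

theorem stmt_1 (m : ℕ) [NeZero m] (r : Fin m)
    (D : Matrix (Fin m) (Fin m) ℚ)
    (hD : D = Matrix.of fun i j => if j = i + 1 then 1 else 0)
    (B : Matrix (Fin m) (Fin m) ℚ) (hB : B = D.transpose)
    (U : Matrix (Fin m) (Fin m) ℚ)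
    (hU : U = Matrix.of fun i _ => if i = r then 1 else 0) :
    (B - 1 + U).det = (-1) ^ (m - 1) * m := by
  obtain ⟨n, rfl⟩ : ∃ n, m = n + 1 := ⟨m - 1, (Nat.succ_pred_eq_of_pos (NeZero.pos m)).symm⟩
  subst hD hB hU
  -- Step 1: reduce to r = 0 by conjugating with the shift permutation
  set A₀ : Matrix (Fin (n+1)) (Fin (n+1)) ℚ :=
    Matrix.of (fun i j => (if i = j + 1 then (1:ℚ) else 0) - (if i = j then 1 else 0)
      + (if i = 0 then 1 else 0)) with hA₀
  have step1 : (((Matrix.of fun i j : Fin (n+1) => if j = i + 1 then (1:ℚ) else 0).transpose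
      - 1 + Matrix.of fun i _ => if i = r then 1 else 0)).det = A₀.det := by
    rw [← Matrix.det_submatrix_equiv_self (Equiv.addRight r)]
    congr 1
    ext i j
    simp only [Matrix.submatrix_apply, Matrix.sub_apply, Matrix.add_apply, Matrix.one_apply,
      Matrix.transpose_apply, Matrix.of_apply, Equiv.coe_addRight, hA₀]
    congr 1
    · congr 1
      · exact if_congr (by rw [add_right_comm j r 1]; exact add_left_inj r) rfl rfl
      · exact if_congr (add_left_inj r) rfl rfl
    · exact if_congr add_eq_right rfl rfl
  rw [step1]
  -- Step 2: A₀ = updateRow (B-1) 0 (row0 + ones), split determinant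
  set S : Matrix (Fin (n+1)) (Fin (n+1)) ℚ :=
    Matrix.of (fun i j => (if i = j + 1 then (1:ℚ) else 0) - (if i = j then 1 else 0)) with hS
  have hA0u : A₀ = S.updateRow 0 (S 0 + fun _ => 1) := by
    ext i j
    by_cases h : i = 0 <;>
      simp [hA₀, hS, h, Matrix.updateRow_apply]
  have hSdet : S.det = 0 := by
    rw [← Matrix.exists_mulVec_eq_zero_iff]
    refine ⟨fun _ => 1, ?_, ?_⟩
    · intro h
      have := congrFun h 0
      simp at this
    · funext i
      simp only [Matrix.mulVec, dotProduct, hS, Matrix.of_apply, mul_one,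
        Finset.sum_sub_distrib]
      have h1 : ∑ j : Fin (n+1), (if i = j + 1 then (1:ℚ) else 0) = 1 := by
        rw [Finset.sum_congr rfl (g := fun j => if j = i - 1 then (1:ℚ) else 0)]
        · simp
        · intro j _
          congr 1
          simp only [eq_iff_iff]
          constructor
          · rintro rfl; rw [add_sub_cancel_right]
          · rintro rfl; rw [sub_add_cancel]
      rw [h1]
      simp
  -- Step 3: det A₀ = det N where N has row 0 all ones
  set N : Matrix (Fin (n+1)) (Fin (n+1)) ℚ := S.updateRow 0 (fun _ => 1) with hN
  have step3 : A₀.det = N.det := by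
    rw [hA0u, Matrix.det_updateRow_add, Matrix.updateRow_eq_self, hSdet, zero_add]
  -- Step 4: multiply by upper-triangular ones matrix C
  set C : Matrix (Fin (n+1)) (Fin (n+1)) ℚ := Matrix.of (fun j k => if j ≤ k then 1 else 0)
    with hC
  have hCdet : C.det = 1 := by
    rw [Matrix.det_of_upperTriangular]
    · simp [hC]
    · intro i j hij
      simp only [hC, Matrix.of_apply, ite_eq_right_iff]
      intro hle
      exact absurd hle (not_le.mpr hij)
  set M : Matrix (Fin (n+1)) (Fin (n+1)) ℚ :=
    Matrix.of (fun i k => if i = 0 then ((k:ℚ)+1) else (if k = i - 1 then 1 else 0)) with hM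
  have hNC : N * C = M := by
    ext i k
    rw [Matrix.mul_apply]
    by_cases h : i = 0
    · subst h
      simp only [hN, hC, hM, Matrix.updateRow_apply, if_pos rfl, Matrix.of_apply, one_mul]
      rw [Finset.sum_congr rfl (g := fun j => if j ∈ Finset.Iic k then (1:ℚ) else 0)
        (fun j _ => by simp [Finset.mem_Iic]), Finset.sum_ite_mem, Finset.univ_inter,
        Finset.sum_const, Fin.card_Iic]
      simp
    · have hval : (i - 1).val = i.val - 1 := by rw [Fin.coe_sub_one, if_neg h]
      have hpos : 0 < i.val := Fin.pos_of_ne_zero h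
      simp only [hN, hC, hM, Matrix.updateRow_apply, if_neg h, hS, Matrix.of_apply, sub_mul,
        Finset.sum_sub_distrib, ite_mul, one_mul, zero_mul]
      have h1 : ∀ j : Fin (n+1), (i = j + 1) = (j = i - 1) := by
        intro j
        simp only [eq_iff_iff]
        constructor
        · rintro rfl; rw [add_sub_cancel_right]
        · rintro rfl; rw [sub_add_cancel]
      simp only [h1]
      rw [Finset.sum_ite_eq' Finset.univ (i - 1), Finset.sum_ite_eq Finset.univ i]
      simp only [Finset.mem_univ, if_pos]
      have e1 : (i - 1 ≤ k) ↔ (i.val - 1 ≤ k.val) := by rw [Fin.le_def, hval]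
      have e2 : (i ≤ k) ↔ (i.val ≤ k.val) := Fin.le_def
      have e3 : (k = i - 1) ↔ (k.val = i.val - 1) := by rw [Fin.ext_iff, hval]
      rw [if_congr e1 rfl rfl, if_congr e2 rfl rfl, if_congr e3 rfl rfl]
      split_ifs <;> first | omega | norm_num
  have step4 : N.det = M.det := by
    rw [← hNC, Matrix.det_mul, hCdet, mul_one]
  -- Step 5: analyze M via permutation matrix
  set σ : Equiv.Perm (Fin (n+1)) := (finRotate (n+1)).symm with hσ
  have hσa : ∀ i, σ i = i - 1 := by
    intro i
    rw [hσ, Equiv.symm_apply_eq, finRotate_succ_apply, sub_add_cancel]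
  set P : Matrix (Fin (n+1)) (Fin (n+1)) ℚ := (1 : Matrix _ _ ℚ).submatrix σ id with hP
  have hPapp : ∀ i k, P i k = if k = i - 1 then 1 else 0 := by
    intro i k
    simp [hP, Matrix.one_apply, hσa, eq_comm]
  have hP0 : P 0 = fun k => if k = Fin.last n then 1 else 0 := by
    funext k
    rw [hPapp]
    congr 1
    simp only [eq_iff_iff]
    have : (0 : Fin (n+1)) - 1 = Fin.last n := by
      rw [sub_eq_iff_eq_add, Fin.last_add_one]
    rw [this]
  have hMP : M = P.updateRow 0 (fun k => (k:ℚ)+1) := by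
    ext i k
    by_cases h : i = 0
    · subst h; simp [hM, Matrix.updateRow_apply]
    · simp [hM, Matrix.updateRow_apply, h, hPapp]
  have hPdet : P.det = (-1)^n := by
    rw [hP, Matrix.det_permute, Matrix.det_one, mul_one, hσ]
    have : Equiv.Perm.sign (finRotate (n+1)).symm = Equiv.Perm.sign (finRotate (n+1)) := by
      rw [Equiv.Perm.sign_symm]
    rw [this, sign_finRotate]
    push_cast
    rfl
  have hvsplit : (fun k : Fin (n+1) => (k:ℚ)+1) =
      ((fun k => ((k:ℚ)+1 - (n+1) * (if k = Fin.last n then 1 else 0))) : Fin (n+1) → ℚ)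
      + ((n+1:ℚ)) • ((fun k => if k = Fin.last n then 1 else 0) : Fin (n+1) → ℚ) := by
    funext k
    simp only [Pi.add_apply, Pi.smul_apply, smul_eq_mul]
    ring
  have hwdet : (P.updateRow 0
      (fun k => ((k:ℚ)+1 - (n+1) * (if k = Fin.last n then 1 else 0)))).det = 0 := by
    apply Matrix.det_eq_zero_of_column_eq_zero (Fin.last n)
    intro i
    by_cases h : i = 0
    · subst h
      simp [Matrix.updateRow_apply, Fin.val_last]
    · rw [Matrix.updateRow_apply, if_neg h, hPapp]
      rw [if_neg]
      intro hk
      apply h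
      have : i = Fin.last n + 1 := by rw [hk, sub_add_cancel]
      rw [this, Fin.last_add_one]
  have step5 : M.det = (n+1) * (-1)^n := by
    rw [hMP, hvsplit, Matrix.det_updateRow_add, hwdet, zero_add, Matrix.det_updateRow_smul,
      ← hP0, Matrix.updateRow_eq_self, hPdet]
  rw [step3, step4, step5]
  push_cast
  ring
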